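/- Let X be a two-dimensional real normed linear space, x ∈ X a non-smooth point (J(x) contains two linearly independent functionals), and T : X → X a linear operator. If V = {y : h₁(y) ≥ 0, h₂(y) ≤ 0} is the associated cone of x corresponding to two linearly independent h₁, h₂ ∈ Ext J(x), then the set D = {y ∈ x^⊥_B : Tx ⊥_B Ty} ∩ V is a normal cone, i.e., D + D ⊆ D, αD ⊆ D for all α ≥ 0, and D ∩ (−D) = {0}. -/

import Mathlib

/-- Birkhoff-James orthogonality. -/
def BJOrth {X : Type*} [NormedAddCommGroup X] [NormedSpace ℝ X] (x y : X) : Prop :=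
  ∀ t : ℝ, ‖x‖ ≤ ‖x + t • y‖

/-- The set of support functionals at `x`. -/
def suppFun {X : Type*} [NormedAddCommGroup X] [NormedSpace ℝ X] (x : X) :
    Set (X →L[ℝ] ℝ) := {f | ‖f‖ = 1 ∧ f x = ‖x‖}

section Aux

variable {X : Type*} [NormedAddCommGroup X] [NormedSpace ℝ X]

lemma bjorth_of_exists {x y : X}
    (h : ∃ f : X →L[ℝ] ℝ, ‖f‖ ≤ 1 ∧ f x = ‖x‖ ∧ f y = 0) : BJOrth x y := by
  obtain ⟨f, hf1, hfx, hfy⟩ := h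
  intro t
  calc ‖x‖ = f (x + t • y) := by simp [hfx, hfy]
    _ ≤ ‖f (x + t • y)‖ := le_abs_self _
    _ ≤ ‖f‖ * ‖x + t • y‖ := f.le_opNorm _
    _ ≤ 1 * ‖x + t • y‖ := by
        exact mul_le_mul_of_nonneg_right hf1 (norm_nonneg _)
    _ = ‖x + t • y‖ := one_mul _

/-- From two support-type functionals with opposite signs at `y`, produce one vanishing at `y`. -/
lemma exists_comb {x y : X} {f g : X →L[ℝ] ℝ} (hf1 : ‖f‖ ≤ 1) (hg1 : ‖g‖ ≤ 1)
    (hfx : f x = ‖x‖) (hgx : g x = ‖x‖) (hfy : 0 ≤ f y) (hgy : g y ≤ 0) :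
    ∃ h : X →L[ℝ] ℝ, ‖h‖ ≤ 1 ∧ h x = ‖x‖ ∧ h y = 0 := by
  rcases eq_or_lt_of_le (sub_nonneg.mpr (hgy.trans hfy)) with hd | hd
  · -- f y - g y = 0, so f y = 0
    have hd2 : f y - g y = 0 := hd.symm
    exact ⟨f, hf1, hfx, le_antisymm (by linarith) hfy⟩
  · set d : ℝ := f y - g y with hd'
    have hdpos : 0 < d := hd
    set s : ℝ := f y / d with hs'
    have hs0 : 0 ≤ s := div_nonneg hfy hdpos.le
    have hs1 : s ≤ 1 := by
      rw [hs', div_le_one hdpos]; linarith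
    refine ⟨(1 - s) • f + s • g, ?_, ?_, ?_⟩
    · have e1 : ‖(1 - s) • f‖ ≤ (1 - s) * ‖f‖ := by
        simpa [abs_of_nonneg (by linarith : (0:ℝ) ≤ 1 - s)] using
          ContinuousLinearMap.opNorm_smul_le (1 - s) f
      have e2 : ‖s • g‖ ≤ s * ‖g‖ := by
        simpa [abs_of_nonneg hs0] using ContinuousLinearMap.opNorm_smul_le s g
      have hnf : (0:ℝ) ≤ ‖f‖ := norm_nonneg f
      have hng : (0:ℝ) ≤ ‖g‖ := norm_nonneg g
      calc ‖(1 - s) • f + s • g‖ ≤ ‖(1 - s) • f‖ + ‖s • g‖ := norm_add_le _ _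
        _ ≤ (1 - s) * ‖f‖ + s * ‖g‖ := add_le_add e1 e2
        _ ≤ 1 := by nlinarith
    · simp only [ContinuousLinearMap.add_apply, ContinuousLinearMap.smul_apply, hfx, hgx,
        smul_eq_mul]
      ring
    · simp only [ContinuousLinearMap.add_apply, ContinuousLinearMap.smul_apply, smul_eq_mul]
      have : s * d = f y := by
        rw [hs']; field_simp
      rw [hd'] at this
      nlinarith [this]

/-- James' characterization of Birkhoff orthogonality in dimension 2. -/
lemma james2 (hdim : Module.finrank ℝ X = 2) {u v : X} (hu : u ≠ 0) (h : BJOrth u v) :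
    ∃ f : X →L[ℝ] ℝ, ‖f‖ ≤ 1 ∧ f u = ‖u‖ ∧ f v = 0 := by
  have : FiniteDimensional ℝ X := FiniteDimensional.of_finrank_pos (by omega)
  rcases eq_or_ne v 0 with rfl | hv
  · obtain ⟨f, hf1, hfu⟩ := exists_dual_vector ℝ u (norm_ne_zero_iff.mpr hu)
    exact ⟨f, hf1.le, hfu, map_zero f⟩
  · -- u and v are linearly independent
    have hli : LinearIndependent ℝ ![u, v] := by
      rw [LinearIndependent.pair_iff]
      intro s t hst
      by_cases hs : s = 0
      · subst hs
        simp only [zero_smul, zero_add, smul_eq_zero] at hst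
        exact ⟨rfl, hst.resolve_right hv⟩
      · exfalso
        have h0 : u + (t / s) • v = 0 := by
          have h1 : u + (t / s) • v = s⁻¹ • (s • u + t • v) := by
            rw [smul_add, smul_smul, smul_smul, inv_mul_cancel₀ hs, one_smul,
              div_eq_inv_mul]
          rw [h1, hst, smul_zero]
        have := h (t / s)
        rw [h0, norm_zero] at this
        exact hu (norm_le_zero_iff.mp this)
    let B := basisOfLinearIndependentOfCardEqFinrank hli (by simp [hdim])
    have hB : ⇑B = ![u, v] := coe_basisOfLinearIndependentOfCardEqFinrank hli (by simp [hdim])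
    have hB0 : B 0 = u := by rw [hB]; rfl
    have hB1 : B 1 = v := by rw [hB]; rfl
    let flin : X →ₗ[ℝ] ℝ := ‖u‖ • (B.coord 0)
    let f : X →L[ℝ] ℝ := LinearMap.toContinuousLinearMap flin
    have hfy : ∀ y : X, f y = ‖u‖ * B.repr y 0 := fun y => by
      simp [f, flin, Module.Basis.coord_apply, smul_eq_mul]
    have key : ∀ y : X, ‖f y‖ ≤ 1 * ‖y‖ := by
      intro y
      have hy : B.repr y 0 • u + B.repr y 1 • v = y := by
        have := B.sum_repr y
        rwa [Fin.sum_univ_two, hB0, hB1] at this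
      rw [hfy y, one_mul]
      set α := B.repr y 0
      set β := B.repr y 1
      by_cases hα : α = 0
      · simp [hα]
      · have hyy : y = α • (u + (β / α) • v) := by
          rw [smul_add, smul_smul, ← hy]
          congr 2
          field_simp
        have : ‖y‖ = |α| * ‖u + (β / α) • v‖ := by
          rw [hyy, norm_smul, Real.norm_eq_abs]
        rw [this, Real.norm_eq_abs, abs_mul, abs_of_nonneg (norm_nonneg u), mul_comm]
        exact mul_le_mul_of_nonneg_left (h (β / α)) (abs_nonneg α)
    refine ⟨f, ContinuousLinearMap.opNorm_le_bound f zero_le_one key, ?_, ?_⟩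
    · rw [hfy u, ← hB0, B.repr_self_apply]
      simp
    · rw [hfy v, ← hB1, B.repr_self_apply]
      simp
  
/-- In dimension two, two linearly independent functionals have trivial common kernel. -/
lemma eq_zero_of_two (hdim : Module.finrank ℝ X = 2) {f g : X →L[ℝ] ℝ}
    (hind : LinearIndependent ℝ ![f, g]) {w : X} (hf : f w = 0) (hg : g w = 0) : w = 0 := by
  have : FiniteDimensional ℝ X := FiniteDimensional.of_finrank_pos (by omega)
  by_contra hw
  obtain ⟨φ, hφ1, hφw⟩ := exists_dual_vector ℝ w (norm_ne_zero_iff.mpr hw)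
  have hdual : Module.finrank ℝ (X →L[ℝ] ℝ) = 2 := by
    rw [(LinearMap.toContinuousLinearMap :
      (X →ₗ[ℝ] ℝ) ≃ₗ[ℝ] (X →L[ℝ] ℝ)).symm.finrank_eq, Module.finrank_linearMap,
      Module.finrank_self, mul_one, hdim]
  let B := basisOfLinearIndependentOfCardEqFinrank hind (by simp [hdual])
  have hB : ⇑B = ![f, g] := coe_basisOfLinearIndependentOfCardEqFinrank hind (by simp [hdual])
  have hB0 : B 0 = f := by rw [hB]; rfl
  have hB1 : B 1 = g := by rw [hB]; rfl
  have hφ : B.repr φ 0 • f + B.repr φ 1 • g = φ := by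
    have := B.sum_repr φ
    rwa [Fin.sum_univ_two, hB0, hB1] at this
  have : φ w = 0 := by
    rw [← hφ]
    simp [hf, hg]
  rw [hφw] at this
  exact hw (norm_le_zero_iff.mp this.le)

end Aux

theorem stmt_13 {X : Type*} [NormedAddCommGroup X] [NormedSpace ℝ X]
    (hdim : Module.finrank ℝ X = 2) (x : X) (hx : x ≠ 0) (T : X →L[ℝ] X)
    (h₁ h₂ : X →L[ℝ] ℝ)
    (hh₁ : h₁ ∈ Set.extremePoints ℝ (suppFun x))
    (hh₂ : h₂ ∈ Set.extremePoints ℝ (suppFun x))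
    (hind : LinearIndependent ℝ ![h₁, h₂]) :
    let D : Set X := {y : X | BJOrth x y ∧ BJOrth (T x) (T y)} ∩
      {y : X | 0 ≤ h₁ y ∧ h₂ y ≤ 0}
    (∀ a ∈ D, ∀ b ∈ D, a + b ∈ D) ∧
    (∀ α : ℝ, 0 ≤ α → ∀ a ∈ D, α • a ∈ D) ∧
    D ∩ (-D) = {0} := by
  intro D
  obtain ⟨⟨hn₁, hx₁⟩, -⟩ := hh₁
  obtain ⟨⟨hn₂, hx₂⟩, -⟩ := hh₂
  have hxpos : (0 : ℝ) < ‖x‖ := norm_pos_iff.mpr hx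
  have hmemD : ∀ y : X, y ∈ D ↔
      (BJOrth x y ∧ BJOrth (T x) (T y)) ∧ (0 ≤ h₁ y ∧ h₂ y ≤ 0) := by
    intro y; rfl
  refine ⟨?_, ?_, ?_⟩
  · -- closure under addition
    intro a ha b hb
    rw [hmemD] at ha hb ⊢
    obtain ⟨⟨-, hTa⟩, ha1, ha2⟩ := ha
    obtain ⟨⟨-, hTb⟩, hb1, hb2⟩ := hb
    have hsum1 : 0 ≤ h₁ (a + b) := by rw [map_add]; linarith
    have hsum2 : h₂ (a + b) ≤ 0 := by rw [map_add]; linarith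
    refine ⟨⟨?_, ?_⟩, hsum1, hsum2⟩
    · -- BJOrth x (a + b), since a + b lies in the cone V
      exact bjorth_of_exists
        (exists_comb hn₁.le hn₂.le hx₁ hx₂ hsum1 hsum2)
    · -- BJOrth (T x) (T (a + b)): the key geometric step
      rcases eq_or_ne (T x) 0 with hTx | hTx
      · intro t; rw [hTx, norm_zero]; exact norm_nonneg _
      · obtain ⟨f, hf1, hfu, hfa⟩ := james2 hdim hTx hTa
        obtain ⟨g, hg1, hgu, hgb⟩ := james2 hdim hTx hTb
        set c : ℝ := ‖T x‖ with hc
        have hcpos : (0 : ℝ) < c := norm_pos_iff.mpr hTx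
        set P : ℝ := f (T b) with hP
        set Q : ℝ := g (T a) with hQ
        rcases le_or_gt (P * Q) 0 with hPQ | hPQ
        · -- opposite signs: intermediate value argument via exists_comb
          have hTab : T (a + b) = T a + T b := map_add T a b
          rcases mul_nonpos_iff.mp hPQ with ⟨hPpos, hQneg⟩ | ⟨hPneg, hQpos⟩
          · refine bjorth_of_exists ?_
            rw [hTab]
            have hfy : 0 ≤ f (T a + T b) := by rw [map_add, hfa]; linarith
            have hgy : g (T a + T b) ≤ 0 := by rw [map_add, hgb]; linarith
            exact exists_comb hf1 hg1 hfu hgu hfy hgy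
          · refine bjorth_of_exists ?_
            rw [hTab]
            have hgy : 0 ≤ g (T a + T b) := by rw [map_add, hgb]; linarith
            have hfy : f (T a + T b) ≤ 0 := by rw [map_add, hfa]; linarith
            exact exists_comb hg1 hf1 hgu hfu hgy hfy
        · -- same strict signs: contradiction with the cone geometry
          exfalso
          have hPne : P ≠ 0 := fun h => by simp [h] at hPQ
          have hQne : Q ≠ 0 := fun h => by simp [h] at hPQ
          -- f ∘ T and g ∘ T are linearly independent
          have hindT : LinearIndependent ℝ ![f.comp T, g.comp T] := by
            rw [LinearIndependent.pair_iff]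
            intro s t hst
            have hsta : t * Q = 0 := by
              have h3 := congrArg (fun φ : X →L[ℝ] ℝ => φ a) hst
              simp only [ContinuousLinearMap.add_apply, ContinuousLinearMap.smul_apply,
                ContinuousLinearMap.comp_apply, ContinuousLinearMap.zero_apply,
                smul_eq_mul, hfa, ← hQ, mul_zero, zero_add] at h3
              exact h3
            have hstb : s * P = 0 := by
              have h3 := congrArg (fun φ : X →L[ℝ] ℝ => φ b) hst
              simp only [ContinuousLinearMap.add_apply, ContinuousLinearMap.smul_apply,
                ContinuousLinearMap.comp_apply, ContinuousLinearMap.zero_apply,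
                smul_eq_mul, hgb, ← hP, mul_zero, add_zero] at h3
              exact h3
            exact ⟨(mul_eq_zero.mp hstb).resolve_right hPne,
              (mul_eq_zero.mp hsta).resolve_right hQne⟩
          set lam : ℝ := c / Q with hlam
          set mu : ℝ := c / P with hmu
          have hfw : (f.comp T) (x - lam • a - mu • b) = 0 := by
            simp only [map_sub, map_smul, ContinuousLinearMap.comp_apply, hfa, hfu, ← hP, ← hc]
            rw [hmu]
            rw [smul_eq_mul, smul_eq_mul, mul_zero, div_mul_cancel₀ c hPne]; ring
          have hgw : (g.comp T) (x - lam • a - mu • b) = 0 := by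
            simp only [map_sub, map_smul, ContinuousLinearMap.comp_apply, hgb, hgu, ← hQ, ← hc]
            rw [hlam]
            rw [smul_eq_mul, smul_eq_mul, mul_zero, div_mul_cancel₀ c hQne]; ring
          have hw : x = lam • a + mu • b := by
            have h0 := eq_zero_of_two hdim hindT hfw hgw
            have h' : x - (lam • a + mu • b) = 0 := by rw [← h0]; abel
            exact sub_eq_zero.mp h'
          rcases (mul_pos_iff.mp hPQ) with ⟨hPp, hQp⟩ | ⟨hPn, hQn⟩
          · -- both positive: x in the cone V, contradiction with h₂ x = ‖x‖ > 0
            have hlp : 0 < lam := div_pos hcpos hQp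
            have hmp : 0 < mu := div_pos hcpos hPp
            have : h₂ x ≤ 0 := by
              rw [hw, map_add, map_smul, map_smul, smul_eq_mul, smul_eq_mul]
              nlinarith
            rw [hx₂] at this
            linarith
          · -- both negative: -x in the cone V, contradiction with h₁ x = ‖x‖ > 0
            have hln : lam < 0 := div_neg_of_pos_of_neg hcpos hQn
            have hmn : mu < 0 := div_neg_of_pos_of_neg hcpos hPn
            have : h₁ x ≤ 0 := by
              rw [hw, map_add, map_smul, map_smul, smul_eq_mul, smul_eq_mul]
              nlinarith
            rw [hx₁] at this
            linarith
  · -- closure under nonnegative scalar multiplication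
    intro α hα a ha
    rw [hmemD] at ha ⊢
    obtain ⟨⟨hxa, hTa⟩, ha1, ha2⟩ := ha
    refine ⟨⟨?_, ?_⟩, ?_, ?_⟩
    · intro t
      have := hxa (t * α)
      rwa [mul_smul] at this
    · intro t
      have := hTa (t * α)
      rwa [mul_smul, ← map_smul T] at this
    · rw [map_smul, smul_eq_mul]; positivity
    · rw [map_smul, smul_eq_mul]
      exact mul_nonpos_of_nonneg_of_nonpos hα ha2
  · -- pointedness
    ext y
    simp only [Set.mem_inter_iff, Set.mem_neg, Set.mem_singleton_iff]
    constructor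
    · rintro ⟨hy, hny⟩
      rw [hmemD] at hy hny
      obtain ⟨-, hy1, hy2⟩ := hy
      obtain ⟨-, hny1, hny2⟩ := hny
      rw [map_neg] at hny1 hny2
      have e1 : h₁ y = 0 := le_antisymm (by linarith) hy1
      have e2 : h₂ y = 0 := le_antisymm hy2 (by linarith)
      exact eq_zero_of_two hdim hind e1 e2
    · rintro rfl
      have h0 : (0 : X) ∈ D := by
        rw [hmemD]
        refine ⟨⟨?_, ?_⟩, ?_, ?_⟩
        · intro t; simp
        · intro t; simp
        · simp
        · simp
      exact ⟨h0, by rwa [neg_zero]⟩
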